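/- Let ρ, σ, and τ be density operators on ℂⁿ, and define D(ρ,σ) = √(1 − tr(ρσ)). Then the triangle inequality holds: D(ρ,σ) ≤ D(ρ,τ) + D(τ,σ). -/

import Mathlib

open scoped ComplexOrder
open scoped Matrix

lemma psd_diag_nonneg {n : ℕ} {M : Matrix (Fin n) (Fin n) ℂ} (hM : M.PosSemidef) (i : Fin n) :
    0 ≤ M i i := by
  simpa [dotProduct, Pi.single_apply] using hM.dotProduct_mulVec_nonneg (Pi.single i 1)

lemma psd_trace_re_nonneg {n : ℕ} {M : Matrix (Fin n) (Fin n) ℂ} (hM : M.PosSemidef) :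
    0 ≤ M.trace.re := by
  have : M.trace = ∑ i, M i i := rfl
  rw [this, Complex.re_sum]
  exact Finset.sum_nonneg fun i _ => (Complex.le_def.mp (psd_diag_nonneg hM i)).1

lemma psd_trace_sq_le_one {n : ℕ} {A : Matrix (Fin n) (Fin n) ℂ} (hA : A.PosSemidef)
    (htr : A.trace = 1) : ((A * A).trace).re ≤ 1 := by
  have hH := hA.1
  set U : Matrix (Fin n) (Fin n) ℂ := (Matrix.IsHermitian.eigenvectorUnitary hH : Matrix (Fin n) (Fin n) ℂ) with hUdef
  have hUU : U * star U = 1 := Matrix.mem_unitaryGroup_iff.mp (Matrix.IsHermitian.eigenvectorUnitary hH).2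
  have hD : star U * A * U = Matrix.diagonal (RCLike.ofReal ∘ hH.eigenvalues) := by
    have := hH.conjStarAlgAut_star_eigenvectorUnitary
    rw [Unitary.conjStarAlgAut_apply] at this
    simpa [hUdef] using this
  set D : Matrix (Fin n) (Fin n) ℂ := Matrix.diagonal (RCLike.ofReal ∘ hH.eigenvalues) with hDdef
  -- trace D = trace A
  have h1 : D.trace = A.trace := by
    rw [← hD, Matrix.trace_mul_cycle, hUU, Matrix.one_mul]
  have h2 : (D * D).trace = (A * A).trace := by
    rw [← hD]
    have : (star U * A * U) * (star U * A * U) = star U * (A * A) * U := by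
      calc (star U * A * U) * (star U * A * U)
          = star U * A * (U * star U) * A * U := by noncomm_ring
        _ = star U * (A * A) * U := by rw [hUU]; noncomm_ring
    rw [this, Matrix.trace_mul_cycle, hUU, Matrix.one_mul]
  have hDtr : D.trace = ∑ i, (hH.eigenvalues i : ℂ) := by
    simp [hDdef, Matrix.trace_diagonal]
  have hDDtr : (D * D).trace = ∑ i, ((hH.eigenvalues i : ℂ) * (hH.eigenvalues i : ℂ)) := by
    simp [hDdef, Matrix.diagonal_mul_diagonal, Matrix.trace_diagonal]
  have hev : ∀ i, 0 ≤ hH.eigenvalues i := hA.eigenvalues_nonneg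
  have hsum : ∑ i, hH.eigenvalues i = 1 := by
    have : D.trace = 1 := h1.trans htr
    rw [hDtr] at this
    have := congrArg Complex.re this
    simpa [Complex.re_sum] using this
  have : ((A*A).trace).re = ∑ i, (hH.eigenvalues i)^2 := by
    rw [← h2, hDDtr, Complex.re_sum]
    simp [← Complex.ofReal_mul, pow_two]
  rw [this]
  calc ∑ i, (hH.eigenvalues i)^2 ≤ (∑ i, hH.eigenvalues i)^2 :=
        Finset.sum_sq_le_sq_sum_of_nonneg (fun i _ => hev i)
    _ = 1 := by rw [hsum]; norm_num

/-- Scalar core: if the quadratic form with Gram matrix [[1,a,b],[a,1,c],[b,c,1]]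
is positive semidefinite, then √(1-a) ≤ √(1-b) + √(1-c). -/
lemma noname_scalar_key (a b c : ℝ)
    (H : ∀ x y z : ℝ, 0 ≤ x^2 + y^2 + z^2 + 2*a*(x*y) + 2*b*(x*z) + 2*c*(y*z)) :
    Real.sqrt (1 - a) ≤ Real.sqrt (1 - b) + Real.sqrt (1 - c) := by
  have hb : b ≤ 1 := by nlinarith [H 1 0 (-1)]
  have hc : c ≤ 1 := by nlinarith [H 0 1 (-1)]
  set s := Real.sqrt (1 - b) with hsdef
  set t := Real.sqrt (1 - c) with htdef
  have hs0 : 0 ≤ s := Real.sqrt_nonneg _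
  have ht0 : 0 ≤ t := Real.sqrt_nonneg _
  have hs2 : s^2 = 1 - b := Real.sq_sqrt (by linarith)
  have ht2 : t^2 = 1 - c := Real.sq_sqrt (by linarith)
  have key : 1 - a ≤ (s + t)^2 := by
    rcases eq_or_lt_of_le hs0 with hs' | hs'
    · -- s = 0, so b = 1
      have hb1 : b = 1 := by nlinarith
      have hac : c ≤ a := by
        by_contra hlt
        push_neg at hlt
        have hca : 0 < c - a := by linarith
        have h := H ((t^2+1)/(c-a)) 1 (-1-((t^2+1)/(c-a)))
        have hl : ((t^2+1)/(c-a)) * (c - a) = t^2 + 1 := by field_simp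
        nlinarith [h, hl]
      nlinarith
    · rcases eq_or_lt_of_le ht0 with ht' | ht'
      · -- t = 0, so c = 1
        have hc1 : c = 1 := by nlinarith
        have hab : a = b := by nlinarith [H (a-b) (-1) 1]
        nlinarith
      · have h := H t s (-(s+t))
        nlinarith [h, mul_pos hs' ht']
  calc Real.sqrt (1-a) ≤ Real.sqrt ((s+t)^2) := Real.sqrt_le_sqrt key
    _ = s + t := Real.sqrt_sq (by positivity)

/-- For density operators `ρ, σ, τ` on `ℂⁿ`, the no-name distance
`D(ρ,σ) = √(1 - tr(ρσ))` satisfies the triangle inequality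
`D(ρ,σ) ≤ D(ρ,τ) + D(τ,σ)`. -/
theorem noname_distance_triangle
    (n : ℕ) (ρ σ τ : Matrix (Fin n) (Fin n) ℂ)
    (hρ : ρ.PosSemidef) (hσ : σ.PosSemidef) (hτ : τ.PosSemidef)
    (hρtr : ρ.trace = 1) (hσtr : σ.trace = 1) (hτtr : τ.trace = 1) :
    Real.sqrt (1 - ((ρ * σ).trace).re) ≤
      Real.sqrt (1 - ((ρ * τ).trace).re) + Real.sqrt (1 - ((τ * σ).trace).re) := by
  apply noname_scalar_key
  intro x y z
  set M := (x:ℂ) • ρ + (y:ℂ) • σ + (z:ℂ) • τ with hM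
  have hMH : Mᴴ = M := by
    simp [hM, Matrix.conjTranspose_add, Matrix.conjTranspose_smul, hρ.1.eq, hσ.1.eq, hτ.1.eq,
      Complex.star_def, Complex.conj_ofReal]
  have hpsd : (M * M).PosSemidef := by
    have := Matrix.posSemidef_conjTranspose_mul_self M
    rwa [hMH] at this
  have hMM : M * M = ((x:ℂ)*(x:ℂ)) • (ρ*ρ) + ((x:ℂ)*(y:ℂ)) • (ρ*σ) + ((x:ℂ)*(z:ℂ)) • (ρ*τ)
      + ((y:ℂ)*(x:ℂ)) • (σ*ρ) + ((y:ℂ)*(y:ℂ)) • (σ*σ) + ((y:ℂ)*(z:ℂ)) • (σ*τ)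
      + ((z:ℂ)*(x:ℂ)) • (τ*ρ) + ((z:ℂ)*(y:ℂ)) • (τ*σ) + ((z:ℂ)*(z:ℂ)) • (τ*τ) := by
    simp only [hM, add_mul, mul_add, Matrix.smul_mul, Matrix.mul_smul, smul_smul]
    module
  have hre : ((M*M).trace).re = x*x*((ρ*ρ).trace).re + x*y*((ρ*σ).trace).re
      + x*z*((ρ*τ).trace).re + y*x*((σ*ρ).trace).re + y*y*((σ*σ).trace).re
      + y*z*((σ*τ).trace).re + z*x*((τ*ρ).trace).re + z*y*((τ*σ).trace).re
      + z*z*((τ*τ).trace).re := by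
    rw [hMM]
    simp [Matrix.trace_add, Matrix.trace_smul, smul_eq_mul, Complex.add_re, Complex.mul_re,
      Complex.ofReal_re, Complex.ofReal_im]
  have h0 : 0 ≤ ((M*M).trace).re := by
    have : M.trace = M.trace := rfl
    exact psd_trace_re_nonneg hpsd
  have hp : ((ρ*ρ).trace).re ≤ 1 := psd_trace_sq_le_one hρ hρtr
  have hq : ((σ*σ).trace).re ≤ 1 := psd_trace_sq_le_one hσ hσtr
  have hr : ((τ*τ).trace).re ≤ 1 := psd_trace_sq_le_one hτ hτtr
  have e1 : ((σ*ρ).trace) = ((ρ*σ).trace) := Matrix.trace_mul_comm σ ρ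
  have e2 : ((τ*ρ).trace) = ((ρ*τ).trace) := Matrix.trace_mul_comm τ ρ
  have e3 : ((σ*τ).trace) = ((τ*σ).trace) := Matrix.trace_mul_comm σ τ
  rw [hre, e1, e2, e3] at h0
  nlinarith [h0, hp, hq, hr, sq_nonneg x, sq_nonneg y, sq_nonneg z]
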